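/- Let F : ℝ² → ℝ² be given by F(x,y) = (x+1, y), and equip ℝ² with the Riemannian metric ds² = (1+e^{-y})² dx² + dy². Then the orbit x_n = F^n(0,0) = (n, 0) has rate of escape exactly 1 with respect to the distance d of this metric: lim_{n→∞} d((0,0),(n,0))/n = 1. Specifically, n ≤ d((0,0),(n,0)) ≤ n + 2 log n + 1 for all n ≥ 1. -/

import Mathlib

open Filter

/-- The Riemannian distance of the metric `ds² = (1+e^{-y})² dx² + dy²` on `ℝ²`,
defined as the infimum of lengths of `C¹` paths. -/
noncomputable def riemDist (p q : ℝ × ℝ) : ℝ :=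
  sInf {l : ℝ | ∃ γ : ℝ → ℝ × ℝ, ContDiff ℝ 1 γ ∧ γ 0 = p ∧ γ 1 = q ∧
    l = ∫ t in (0:ℝ)..1, Real.sqrt ((1 + Real.exp (-(γ t).2)) ^ 2 *
      (deriv (fun s => (γ s).1) t) ^ 2 + (deriv (fun s => (γ s).2) t) ^ 2)}

local notation "st" => Real.smoothTransition

private lemma expNegInvGlue_mono : Monotone expNegInvGlue := by
  intro a b hab
  rcases le_or_gt b 0 with hb | hb
  · rw [expNegInvGlue.zero_of_nonpos (hab.trans hb), expNegInvGlue.zero_of_nonpos hb]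
  rcases le_or_gt a 0 with ha | ha
  · rw [expNegInvGlue.zero_of_nonpos ha]; exact expNegInvGlue.nonneg b
  · simp only [expNegInvGlue, if_neg (not_le.2 ha), if_neg (not_le.2 hb)]
    have : b⁻¹ ≤ a⁻¹ := by gcongr
    exact Real.exp_le_exp.2 (by linarith)

private lemma st_mono : Monotone st := by
  intro a b hab
  have h1 := expNegInvGlue_mono hab
  have h2 := expNegInvGlue_mono (by linarith : 1 - b ≤ 1 - a)
  unfold Real.smoothTransition
  rw [div_le_div_iff₀ (Real.smoothTransition.pos_denom a) (Real.smoothTransition.pos_denom b)]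
  nlinarith [expNegInvGlue.nonneg a, expNegInvGlue.nonneg (1-b), expNegInvGlue.nonneg b,
    expNegInvGlue.nonneg (1-a),
    mul_le_mul h1 h2 (expNegInvGlue.nonneg (1-b)) (expNegInvGlue.nonneg b)]

private lemma st_diff : Differentiable ℝ st :=
  (Real.smoothTransition.contDiff (n := 1)).differentiable (by simp)

private lemma st_deriv_nonneg (x : ℝ) : 0 ≤ deriv st x := by
  have hd : HasDerivAt st (deriv st x) x := (st_diff x).hasDerivAt
  have h1 : Tendsto (slope st x) (nhdsWithin x (Set.Ioi x)) (nhds (deriv st x)) :=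
    (hasDerivAt_iff_tendsto_slope.1 hd).mono_left
      (nhdsWithin_mono x (fun y hy => ne_of_gt hy))
  refine ge_of_tendsto h1 ?_
  filter_upwards [self_mem_nhdsWithin] with y hy
  have : (0:ℝ) < y - x := sub_pos.2 hy
  rw [slope_def_field]
  exact div_nonneg (sub_nonneg.2 (st_mono hy.le)) this.le

private lemma st_deriv_of_nonpos {x : ℝ} (hx : x ≤ 0) : deriv st x = 0 := by
  have hd : HasDerivAt st (deriv st x) x := (st_diff x).hasDerivAt
  have h1 : Tendsto (slope st x) (nhdsWithin x (Set.Iio x)) (nhds (deriv st x)) :=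
    (hasDerivAt_iff_tendsto_slope.1 hd).mono_left
      (nhdsWithin_mono x (fun y hy => ne_of_lt hy))
  have h2 : Tendsto (slope st x) (nhdsWithin x (Set.Iio x)) (nhds 0) := by
    have : slope st x =ᶠ[nhdsWithin x (Set.Iio x)] fun _ => 0 := by
      filter_upwards [self_mem_nhdsWithin] with y hy
      rw [slope_def_field, Real.smoothTransition.zero_of_nonpos (le_of_lt (lt_of_lt_of_le hy hx)),
        Real.smoothTransition.zero_of_nonpos hx]
      simp
    exact (tendsto_congr' this).2 tendsto_const_nhds
  exact tendsto_nhds_unique h1 h2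

private lemma st_deriv_of_one_le {x : ℝ} (hx : 1 ≤ x) : deriv st x = 0 := by
  have hd : HasDerivAt st (deriv st x) x := (st_diff x).hasDerivAt
  have h1 : Tendsto (slope st x) (nhdsWithin x (Set.Ioi x)) (nhds (deriv st x)) :=
    (hasDerivAt_iff_tendsto_slope.1 hd).mono_left
      (nhdsWithin_mono x (fun y hy => ne_of_gt hy))
  have h2 : Tendsto (slope st x) (nhdsWithin x (Set.Ioi x)) (nhds 0) := by
    have : slope st x =ᶠ[nhdsWithin x (Set.Ioi x)] fun _ => 0 := by
      filter_upwards [self_mem_nhdsWithin] with y hy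
      rw [slope_def_field, Real.smoothTransition.one_of_one_le (hx.trans hy.le),
        Real.smoothTransition.one_of_one_le hx]
      simp
    exact (tendsto_congr' this).2 tendsto_const_nhds
  exact tendsto_nhds_unique h1 h2

private lemma hasDerivAt_st_affine (a c t : ℝ) :
    HasDerivAt (fun s => st (a * s + c)) (deriv st (a * t + c) * a) t := by
  have h1 : HasDerivAt st (deriv st (a * t + c)) (a * t + c) :=
    (st_diff (a * t + c)).hasDerivAt
  have h2 : HasDerivAt (fun s : ℝ => a * s + c) a t := by
    simpa using ((hasDerivAt_id t).const_mul a).add_const c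
  exact h1.comp t h2

private lemma st_deriv_continuous : Continuous (deriv st) :=
  (Real.smoothTransition.contDiff (n := 1)).continuous_deriv le_rfl

private lemma riem_lb {γ : ℝ → ℝ × ℝ} (hγ : ContDiff ℝ 1 γ) {n : ℝ}
    (h0 : γ 0 = (0, 0)) (h1 : γ 1 = (n, 0)) :
    n ≤ ∫ t in (0:ℝ)..1, Real.sqrt ((1 + Real.exp (-(γ t).2)) ^ 2 *
      (deriv (fun s => (γ s).1) t) ^ 2 + (deriv (fun s => (γ s).2) t) ^ 2) := by
  have hX : ContDiff ℝ 1 (fun s => (γ s).1) := contDiff_fst.comp hγ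
  have hY : ContDiff ℝ 1 (fun s => (γ s).2) := contDiff_snd.comp hγ
  have hXc : Continuous (deriv (fun s => (γ s).1)) := hX.continuous_deriv le_rfl
  have hYc : Continuous (deriv (fun s => (γ s).2)) := hY.continuous_deriv le_rfl
  have hc2 : Continuous fun t => (γ t).2 := continuous_snd.comp hγ.continuous
  have hcont : Continuous fun t => Real.sqrt ((1 + Real.exp (-(γ t).2)) ^ 2 *
      (deriv (fun s => (γ s).1) t) ^ 2 + (deriv (fun s => (γ s).2) t) ^ 2) := by
    apply Continuous.sqrt
    exact (((continuous_const.add (Real.continuous_exp.comp hc2.neg)).pow 2).mul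
      (hXc.pow 2)).add (hYc.pow 2)
  have hint : (∫ t in (0:ℝ)..1, deriv (fun s => (γ s).1) t) = n := by
    rw [intervalIntegral.integral_deriv_eq_sub
      (fun x _ => (hX.differentiable (by simp)).differentiableAt)
      (hXc.intervalIntegrable 0 1)]
    rw [h0, h1]
    simp
  calc n = ∫ t in (0:ℝ)..1, deriv (fun s => (γ s).1) t := hint.symm
    _ ≤ _ := by
        apply intervalIntegral.integral_mono_on zero_le_one
          (hXc.intervalIntegrable 0 1) (hcont.intervalIntegrable 0 1)
        intro t _
        have h3 : (deriv (fun s => (γ s).1) t) ^ 2 ≤ (1 + Real.exp (-(γ t).2)) ^ 2 *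
            (deriv (fun s => (γ s).1) t) ^ 2 + (deriv (fun s => (γ s).2) t) ^ 2 := by
          nlinarith [sq_nonneg (deriv (fun s => (γ s).2) t),
            mul_nonneg (Real.exp_pos (-(γ t).2)).le (sq_nonneg (deriv (fun s => (γ s).1) t)),
            mul_nonneg (mul_nonneg (Real.exp_pos (-(γ t).2)).le (Real.exp_pos (-(γ t).2)).le)
              (sq_nonneg (deriv (fun s => (γ s).1) t))]
        calc deriv (fun s => (γ s).1) t ≤ |deriv (fun s => (γ s).1) t| := le_abs_self _
          _ = Real.sqrt ((deriv (fun s => (γ s).1) t) ^ 2) := (Real.sqrt_sq_eq_abs _).symm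
          _ ≤ _ := Real.sqrt_le_sqrt h3

private lemma riem_ub (n : ℕ) (hn : 1 ≤ n) :
    ∃ γ : ℝ → ℝ × ℝ, ContDiff ℝ 1 γ ∧ γ 0 = ((0:ℝ), (0:ℝ)) ∧ γ 1 = ((n:ℝ), (0:ℝ)) ∧
      ((n:ℝ) + 2 * Real.log n + 1) = ∫ t in (0:ℝ)..1, Real.sqrt ((1 + Real.exp (-(γ t).2)) ^ 2 *
        (deriv (fun s => (γ s).1) t) ^ 2 + (deriv (fun s => (γ s).2) t) ^ 2) := by
  set N : ℝ := (n : ℝ) with hNdef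
  have hN : 1 ≤ N := by rw [hNdef]; exact_mod_cast hn
  have hNpos : (0:ℝ) < N := by linarith
  set L : ℝ := Real.log N with hLdef
  have hL : 0 ≤ L := Real.log_nonneg hN
  -- values of smoothTransition at key points
  have e3 : st (3:ℝ) = 1 := Real.smoothTransition.one_of_one_le (by norm_num)
  have e2 : st (2:ℝ) = 1 := Real.smoothTransition.one_of_one_le (by norm_num)
  have e1 : st (1:ℝ) = 1 := Real.smoothTransition.one_of_one_le (by norm_num)
  have e0 : st (0:ℝ) = 0 := Real.smoothTransition.zero_of_nonpos (by norm_num)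
  have em1 : st (-1:ℝ) = 0 := Real.smoothTransition.zero_of_nonpos (by norm_num)
  have em2 : st (-2:ℝ) = 0 := Real.smoothTransition.zero_of_nonpos (by norm_num)
  -- derivative of affine compositions
  have key : ∀ (c t : ℝ), HasDerivAt (fun s => st (3*s - c)) (3 * deriv st (3*t - c)) t := by
    intro c t
    have h1 : HasDerivAt st (deriv st (3*t - c)) (3*t - c) := (st_diff _).hasDerivAt
    have h2 : HasDerivAt (fun s : ℝ => 3*s - c) 3 t := by
      simpa using ((hasDerivAt_id t).const_mul 3).sub_const c
    have h3 := h1.comp t h2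
    exact (mul_comm (deriv st (3*t - c)) 3) ▸ h3
  have key0 : ∀ (t : ℝ), HasDerivAt (fun s => st (3*s)) (3 * deriv st (3*t)) t := by
    intro t
    have h1 : HasDerivAt st (deriv st (3*t)) (3*t) := (st_diff _).hasDerivAt
    have h2 : HasDerivAt (fun s : ℝ => 3*s) 3 t := by
      simpa using (hasDerivAt_id t).const_mul 3
    have h3 := h1.comp t h2
    exact (mul_comm (deriv st (3*t)) 3) ▸ h3
  refine ⟨fun t => (N * st (3*t - 1), L * (st (3*t) - st (3*t - 2))), ?_, ?_, ?_, ?_⟩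
  · apply ContDiff.prodMk
    · exact contDiff_const.mul (Real.smoothTransition.contDiff.comp
        ((contDiff_const.mul contDiff_id).sub contDiff_const))
    · exact contDiff_const.mul ((Real.smoothTransition.contDiff.comp
        (contDiff_const.mul contDiff_id)).sub (Real.smoothTransition.contDiff.comp
        ((contDiff_const.mul contDiff_id).sub contDiff_const)))
  · norm_num [em1, e0, em2]
  · norm_num [e2, e3, e1]
  · -- the length computation
    have hDX : ∀ t : ℝ, deriv (fun s : ℝ => N * st (3*s - 1)) t
        = N * (3 * deriv st (3*t - 1)) := fun t => ((key 1 t).const_mul N).deriv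
    have hDY : ∀ t : ℝ, deriv (fun s : ℝ => L * (st (3*s) - st (3*s - 2))) t
        = L * (3 * deriv st (3*t) - 3 * deriv st (3*t - 2)) :=
      fun t => (((key0 t).sub (key 2 t)).const_mul L).deriv
    set G : ℝ → ℝ := fun t => L * st (3*t) + (N+1) * st (3*t - 1) + L * st (3*t - 2) with hGdef
    have hG : ∀ t : ℝ, HasDerivAt G
        (L * (3 * deriv st (3*t)) + (N+1) * (3 * deriv st (3*t - 1))
          + L * (3 * deriv st (3*t - 2))) t :=
      fun t => (((key0 t).const_mul L).add ((key 1 t).const_mul (N+1))).add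
        ((key 2 t).const_mul L)
    have hDG : ∀ t : ℝ, deriv G t = L * (3 * deriv st (3*t)) + (N+1) * (3 * deriv st (3*t - 1))
          + L * (3 * deriv st (3*t - 2)) := fun t => (hG t).deriv
    have hid : ∀ t : ℝ, Real.sqrt ((1 + Real.exp (-(L * (st (3*t) - st (3*t - 2))))) ^ 2 *
        (deriv (fun s : ℝ => N * st (3*s - 1)) t) ^ 2
        + (deriv (fun s : ℝ => L * (st (3*s) - st (3*s - 2))) t) ^ 2) = deriv G t := by
      intro t
      rw [hDX t, hDY t, hDG t]
      rcases le_or_gt t (1/3) with h | h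
      · have d1 : deriv st (3*t - 1) = 0 := st_deriv_of_nonpos (by linarith)
        have d2 : deriv st (3*t - 2) = 0 := st_deriv_of_nonpos (by linarith)
        rw [d1, d2]
        have : (1 + Real.exp (-(L * (st (3*t) - st (3*t - 2))))) ^ 2 * (N * (3 * 0)) ^ 2
            + (L * (3 * deriv st (3*t) - 3 * 0)) ^ 2 = (L * (3 * deriv st (3*t))) ^ 2 := by ring
        rw [this, Real.sqrt_sq (mul_nonneg hL (mul_nonneg (by norm_num) (st_deriv_nonneg _)))]
        ring
      rcases le_or_gt t (2/3) with h' | h'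
      · have d0 : deriv st (3*t) = 0 := st_deriv_of_one_le (by linarith)
        have d2 : deriv st (3*t - 2) = 0 := st_deriv_of_nonpos (by linarith)
        have hyv : L * (st (3*t) - st (3*t - 2)) = L := by
          rw [Real.smoothTransition.one_of_one_le (by linarith : (1:ℝ) ≤ 3*t),
            Real.smoothTransition.zero_of_nonpos (by linarith : 3*t - 2 ≤ 0)]
          ring
        have hexp : Real.exp (-(L * (st (3*t) - st (3*t - 2)))) = N⁻¹ := by
          rw [hyv, hLdef, Real.exp_neg, Real.exp_log hNpos]
        rw [d0, d2, hexp]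
        have : (1 + N⁻¹) ^ 2 * (N * (3 * deriv st (3*t - 1))) ^ 2
            + (L * (3 * 0 - 3 * 0)) ^ 2
            = ((1 + N⁻¹) * (N * (3 * deriv st (3*t - 1)))) ^ 2 := by ring
        rw [this, Real.sqrt_sq (mul_nonneg (by positivity) (mul_nonneg hNpos.le
          (mul_nonneg (by norm_num) (st_deriv_nonneg _))))]
        have hNne : N ≠ 0 := ne_of_gt hNpos
        field_simp
        ring
      · have d0 : deriv st (3*t) = 0 := st_deriv_of_one_le (by linarith)
        have d1 : deriv st (3*t - 1) = 0 := st_deriv_of_one_le (by linarith)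
        rw [d0, d1]
        have : (1 + Real.exp (-(L * (st (3*t) - st (3*t - 2))))) ^ 2 * (N * (3 * 0)) ^ 2
            + (L * (3 * 0 - 3 * deriv st (3*t - 2))) ^ 2
            = (L * (3 * deriv st (3*t - 2))) ^ 2 := by ring
        rw [this, Real.sqrt_sq (mul_nonneg hL (mul_nonneg (by norm_num) (st_deriv_nonneg _)))]
        ring
    have hcongr : (∫ t in (0:ℝ)..1, Real.sqrt ((1 + Real.exp (-(L * (st (3*t) - st (3*t - 2))))) ^ 2 *
        (deriv (fun s : ℝ => N * st (3*s - 1)) t) ^ 2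
        + (deriv (fun s : ℝ => L * (st (3*s) - st (3*s - 2))) t) ^ 2))
        = ∫ t in (0:ℝ)..1, deriv G t := by
      apply intervalIntegral.integral_congr
      intro t _
      exact hid t
    have hDGcont : Continuous (deriv G) := by
      have : deriv G = fun t => L * (3 * deriv st (3*t)) + (N+1) * (3 * deriv st (3*t - 1))
          + L * (3 * deriv st (3*t - 2)) := funext hDG
      rw [this]
      have c0 : Continuous fun t : ℝ => deriv st (3*t) :=
        st_deriv_continuous.comp (continuous_const.mul continuous_id)
      have c1 : Continuous fun t : ℝ => deriv st (3*t - 1) :=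
        st_deriv_continuous.comp ((continuous_const.mul continuous_id).sub continuous_const)
      have c2 : Continuous fun t : ℝ => deriv st (3*t - 2) :=
        st_deriv_continuous.comp ((continuous_const.mul continuous_id).sub continuous_const)
      exact ((continuous_const.mul (continuous_const.mul c0)).add
        (continuous_const.mul (continuous_const.mul c1))).add
        (continuous_const.mul (continuous_const.mul c2))
    have hFTC : (∫ t in (0:ℝ)..1, deriv G t) = G 1 - G 0 :=
      intervalIntegral.integral_deriv_eq_sub (fun x _ => (hG x).differentiableAt)
        (hDGcont.intervalIntegrable 0 1)
    have hGval : G 1 - G 0 = N + 2 * L + 1 := by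
      simp only [hGdef]
      norm_num [e3, e2, e1, e0, em1, em2]
      try ring
    rw [hcongr, hFTC, hGval]


/-- The orbit `x_n = Fⁿ(0,0) = (n,0)` of `F(x,y) = (x+1,y)` has rate of escape exactly 1
for the metric `ds² = (1+e^{-y})² dx² + dy²`; in fact
`n ≤ d((0,0),(n,0)) ≤ n + 2 log n + 1` for `n ≥ 1`. -/
theorem stmt14 :
    Tendsto (fun n : ℕ => riemDist (0, 0) (n, 0) / n) atTop (nhds 1) ∧
    ∀ n : ℕ, 1 ≤ n → (n : ℝ) ≤ riemDist (0, 0) (n, 0) ∧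
      riemDist (0, 0) (n, 0) ≤ n + 2 * Real.log n + 1 := by
  have bounds : ∀ n : ℕ, 1 ≤ n → (n : ℝ) ≤ riemDist (0, 0) (n, 0) ∧
      riemDist (0, 0) (n, 0) ≤ n + 2 * Real.log n + 1 := by
    intro n hn
    obtain ⟨γ, hγ, h0, h1, hl⟩ := riem_ub n hn
    constructor
    · unfold riemDist
      exact le_csInf ⟨_, ⟨γ, hγ, h0, h1, hl⟩⟩
        (by rintro l ⟨γ', hγ', h0', h1', rfl⟩; exact riem_lb hγ' h0' h1')
    · unfold riemDist
      exact csInf_le ⟨(n:ℝ), by rintro l ⟨γ', hγ', h0', h1', rfl⟩; exact riem_lb hγ' h0' h1'⟩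
        ⟨γ, hγ, h0, h1, hl⟩
  refine ⟨?_, bounds⟩
  have hlog : Tendsto (fun x : ℝ => Real.log x / x) atTop (nhds 0) :=
    Real.isLittleO_log_id_atTop.tendsto_div_nhds_zero
  have hupper : Tendsto (fun m : ℕ => 1 + (2 * (Real.log m / m) + 1 / (m:ℝ))) atTop (nhds 1) := by
    have h2 : Tendsto (fun m : ℕ => Real.log m / (m:ℝ)) atTop (nhds 0) :=
      hlog.comp tendsto_natCast_atTop_atTop
    have h3 : Tendsto (fun m : ℕ => 1 / (m:ℝ)) atTop (nhds 0) :=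
      tendsto_one_div_atTop_nhds_zero_nat
    have h4 := (tendsto_const_nhds (x := (1:ℝ)) (f := atTop (α := ℕ))).add
      ((h2.const_mul 2).add h3)
    simpa using h4
  apply tendsto_of_tendsto_of_tendsto_of_le_of_le' tendsto_const_nhds hupper
  · filter_upwards [eventually_ge_atTop 1] with m hm
    have hb := (bounds m hm).1
    have hm1 : (1:ℝ) ≤ m := by exact_mod_cast hm
    rw [le_div_iff₀ (by linarith : (0:ℝ) < m)]
    linarith
  · filter_upwards [eventually_ge_atTop 1] with m hm
    have hb := (bounds m hm).2
    have hm1 : (1:ℝ) ≤ m := by exact_mod_cast hm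
    have hmpos : (0:ℝ) < m := by linarith
    rw [div_le_iff₀ hmpos]
    have hexp : (1 + (2 * (Real.log m / m) + 1 / (m:ℝ))) * m = m + 2 * Real.log m + 1 := by
      field_simp
      ring
    rw [hexp]
    exact hb
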